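/- Let X be a set with d : X × X × X → ℝ satisfying (Sym), (Tetr), (Z), (N), (B) and (Trans), such that (X,φ) is compact. Then for every tri-Cauchy sequence (x_i) the set Y of points y with LIM(y,(x_i)) is nonempty, and one of the following holds: either (x_i) converges with respect to φ to some point of X, or the set Y is a line. -/

import Mathlib

open Filter Topology

theorem stmt_15 {X : Type*} (d : X → X → X → ℝ) (φ : X → X → ℝ)
    (hSym₁ : ∀ x y z : X, d x y z = d y x z)
    (hSym₂ : ∀ x y z : X, d x y z = d x z y)
    (hTetr : ∀ a b c x : X, d a b c ≤ d a b x + d b c x + d a c x)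
    (hZ : ∀ a b : X, d a b b = 0)
    (hN : ∀ a b : X, a ≠ b → ∃ c : X, d a b c ≠ 0)
    (hB : ∀ x y z : X, d x y z ≤ 1)
    (hTrans : ∀ a b c x y : X, d a b x * d c x y ≤ d a x y + d b x y)
    (hφ : ∀ x y : X, IsLUB (Set.range fun z => d x y z) (φ x y))
    (hcompact : ∀ u : ℕ → X, ∃ y : X, ∃ v : ℕ → ℕ, StrictMono v ∧
      Tendsto (fun n => φ (u (v n)) y) atTop (𝓝 0)) :
    ∀ x : ℕ → X,
      (∀ ε > (0 : ℝ), ∃ m : ℕ, ∀ i ≥ m, ∀ j ≥ m, ∀ k ≥ m, d (x i) (x j) (x k) < ε) →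
      (∃ y : X, ∀ ε > (0 : ℝ), ∃ N : ℕ, ∀ i ≥ N, ∀ j ≥ N, d y (x i) (x j) < ε) ∧
      ((∃ y : X, Tendsto (fun n => φ (x n) y) atTop (𝓝 0)) ∨
        ((∀ p ∈ {y : X | ∀ ε > (0 : ℝ), ∃ N : ℕ, ∀ i ≥ N, ∀ j ≥ N, d y (x i) (x j) < ε},
            ∀ q ∈ {y : X | ∀ ε > (0 : ℝ), ∃ N : ℕ, ∀ i ≥ N, ∀ j ≥ N, d y (x i) (x j) < ε},
            ∀ r ∈ {y : X | ∀ ε > (0 : ℝ), ∃ N : ℕ, ∀ i ≥ N, ∀ j ≥ N, d y (x i) (x j) < ε},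
            d p q r = 0) ∧
          ∀ Z : Set X,
            {y : X | ∀ ε > (0 : ℝ), ∃ N : ℕ, ∀ i ≥ N, ∀ j ≥ N, d y (x i) (x j) < ε} ⊆ Z →
            (∀ p ∈ Z, ∀ q ∈ Z, ∀ r ∈ Z, d p q r = 0) →
            Z = {y : X | ∀ ε > (0 : ℝ), ∃ N : ℕ, ∀ i ≥ N, ∀ j ≥ N, d y (x i) (x j) < ε})) := by
  intro x hcauchy
  -- nonnegativity of d
  have hd0 : ∀ a b c : X, 0 ≤ d a b c := by
    intro a b c
    have h1 := hTetr a b b c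
    have h2 : d a b b = 0 := hZ a b
    have h3 : d b b c = 0 := by
      rw [hSym₂ b b c, hSym₁ b c b]; exact hZ c b
    rw [h2, h3] at h1
    linarith
  -- d is at most φ of any pair
  have hle12 : ∀ a b c : X, d a b c ≤ φ a b := fun a b c => (hφ a b).1 ⟨c, rfl⟩
  have hle13 : ∀ a b c : X, d a b c ≤ φ a c := by
    intro a b c; rw [hSym₂ a b c]; exact hle12 a c b
  have hle23 : ∀ a b c : X, d a b c ≤ φ b c := by
    intro a b c; rw [hSym₁ a b c]; exact hle13 b a c
  -- φ nonnegative
  have hφ0 : ∀ a b : X, 0 ≤ φ a b := by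
    intro a b
    have h := hle12 a b b
    rw [hZ a b] at h
    exact h
  -- φ symmetric
  have hφsymm : ∀ a b : X, φ a b = φ b a := by
    intro a b
    have hrange : (Set.range fun z => d a b z) = (Set.range fun z => d b a z) := by
      simp only [hSym₁ a b]
    exact (hφ a b).unique (hrange ▸ hφ b a)
  -- quasi-triangle: φ a b ≤ 2 φ a w + φ b w
  have hquad : ∀ a b w : X, φ a b ≤ 2 * φ a w + φ b w := by
    intro a b w
    refine (hφ a b).2 ?_
    rintro r ⟨z, rfl⟩
    have h1 := hTetr a b z w
    have h2 : d a b w ≤ φ a w := hle13 a b w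
    have h3 : d b z w ≤ φ b w := hle13 b z w
    have h4 : d a z w ≤ φ a w := hle13 a z w
    linarith
  -- extract eventual bounds from tendsto to 0
  have hget : ∀ (f : ℕ → ℝ), Tendsto f atTop (𝓝 0) → ∀ δ > (0:ℝ), ∃ N : ℕ, ∀ n ≥ N, f n < δ := by
    intro f hf δ hδ
    obtain ⟨N, hN⟩ := (Metric.tendsto_atTop.mp hf) δ hδ
    refine ⟨N, fun n hn => ?_⟩
    have := hN n hn
    rw [Real.dist_eq, sub_zero] at this
    exact lt_of_le_of_lt (le_abs_self _) this
  -- From a φ-convergent subsequence, get arbitrarily late close indices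
  have hlate : ∀ (y : X) (v : ℕ → ℕ), (∀ n, n ≤ v n) →
      Tendsto (fun n => φ (x (v n)) y) atTop (𝓝 0) →
      ∀ ε > (0:ℝ), ∀ m : ℕ, ∃ k ≥ m, φ (x k) y < ε := by
    intro y v hv ht ε hε m
    obtain ⟨N, hN⟩ := hget _ ht ε hε
    exact ⟨v (max N m), le_trans (le_max_right N m) (hv _),
      hN (max N m) (le_max_left N m)⟩
  -- Key step: a point with arbitrarily late close indices is a LIM point
  have stepLIM : ∀ y : X, (∀ ε > (0:ℝ), ∀ m : ℕ, ∃ k ≥ m, φ (x k) y < ε) →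
      ∀ ε > (0:ℝ), ∃ N : ℕ, ∀ i ≥ N, ∀ j ≥ N, d y (x i) (x j) < ε := by
    intro y hy ε hε
    obtain ⟨m, hm⟩ := hcauchy (ε/4) (by linarith)
    obtain ⟨k, hk, hφk⟩ := hy (ε/4) (by linarith) m
    refine ⟨m, fun i hi j hj => ?_⟩
    have h1 := hTetr y (x i) (x j) (x k)
    have h2 : d y (x i) (x k) ≤ φ (x k) y := by
      rw [hSym₂ y (x i) (x k), hSym₁ y (x k) (x i)]; exact hle12 _ _ _
    have h3 : d y (x j) (x k) ≤ φ (x k) y := by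
      rw [hSym₂ y (x j) (x k), hSym₁ y (x k) (x j)]; exact hle12 _ _ _
    have h4 : d (x i) (x j) (x k) < ε/4 := hm i hi j hj k hk
    linarith
  obtain ⟨y₀, v₀, hv₀, ht₀⟩ := hcompact x
  have hy₀ : ∀ ε > (0:ℝ), ∃ N : ℕ, ∀ i ≥ N, ∀ j ≥ N, d y₀ (x i) (x j) < ε :=
    stepLIM y₀ (hlate y₀ v₀ (fun n => hv₀.le_apply) ht₀)
  refine ⟨⟨y₀, hy₀⟩, ?_⟩
  by_cases hA : ∀ ε > (0:ℝ), ∃ m : ℕ, ∀ i ≥ m, ∀ j ≥ m, φ (x i) (x j) < ε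
  · -- convergent case
    left
    refine ⟨y₀, Metric.tendsto_atTop.mpr ?_⟩
    intro ε hε
    obtain ⟨m, hm⟩ := hA (ε/4) (by linarith)
    obtain ⟨k, hk, hφk⟩ := hlate y₀ v₀ (fun n => hv₀.le_apply) ht₀ (ε/4) (by linarith) m
    refine ⟨m, fun n hn => ?_⟩
    have h1 : φ (x n) y₀ ≤ 2 * φ (x n) (x k) + φ y₀ (x k) := hquad _ _ _
    have h2 : φ (x n) (x k) < ε/4 := hm n hn k hk
    have h3 : φ y₀ (x k) < ε/4 := by rw [hφsymm]; exact hφk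
    rw [Real.dist_eq, sub_zero, abs_of_nonneg (hφ0 _ _)]
    linarith
  · -- non-convergent case: the LIM set is a line
    right
    push_neg at hA
    obtain ⟨ε₀, hε₀, hsep⟩ := hA
    constructor
    · -- colinearity of the LIM set
      intro p hp q hq r hr
      simp only [Set.mem_setOf_eq] at hp hq hr
      refine le_antisymm ?_ (hd0 p q r)
      by_contra hcon
      push_neg at hcon
      have hεpos : 0 < d p q r := hcon
      set ε := d p q r with hεdef
      have hε' : 0 < ε * ε₀ / 13 := by positivity
      set ε' := ε * ε₀ / 13 with hε'def
      obtain ⟨N₁, hN₁⟩ := hp ε' hε'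
      obtain ⟨N₂, hN₂⟩ := hq ε' hε'
      obtain ⟨N₃, hN₃⟩ := hr ε' hε'
      set N := max N₁ (max N₂ N₃) with hNdef
      obtain ⟨i, hi, j, hj, hij⟩ := hsep N
      have hiN₁ : i ≥ N₁ := le_trans (le_max_left _ _) hi
      have hiN₂ : i ≥ N₂ := le_trans (le_trans (le_max_left _ _) (le_max_right _ _)) hi
      have hiN₃ : i ≥ N₃ := le_trans (le_trans (le_max_right _ _) (le_max_right _ _)) hi
      have hjN₁ : j ≥ N₁ := le_trans (le_max_left _ _) hj
      have hjN₂ : j ≥ N₂ := le_trans (le_trans (le_max_left _ _) (le_max_right _ _)) hj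
      have hjN₃ : j ≥ N₃ := le_trans (le_trans (le_max_right _ _) (le_max_right _ _)) hj
      -- find c with d (x i) (x j) c > ε₀/2
      have hc : ∃ c : X, ε₀/2 < d (x i) (x j) c := by
        by_contra hno
        push_neg at hno
        have : φ (x i) (x j) ≤ ε₀/2 := (hφ _ _).2 (by rintro r ⟨c, rfl⟩; exact hno c)
        linarith
      obtain ⟨c, hcgt⟩ := hc
      -- generic bound on d a b (x i) for LIM points a b
      have key : ∀ a b : X, d a (x i) (x j) < ε' → d b (x i) (x j) < ε' →
          d a b (x i) ≤ 4 * ε' / ε₀ := by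
        intro a b ha hb
        have htr := hTrans a b c (x i) (x j)
        have hcd : d c (x i) (x j) = d (x i) (x j) c := by
          rw [hSym₁ c (x i) (x j), hSym₂ (x i) c (x j)]
        rw [hcd] at htr
        have h1 : d a b (x i) * (ε₀/2) ≤ d a b (x i) * d (x i) (x j) c :=
          mul_le_mul_of_nonneg_left (le_of_lt hcgt) (hd0 _ _ _)
        have h2 : d a b (x i) * (ε₀/2) ≤ 2 * ε' := by linarith
        rw [le_div_iff₀ hε₀]
        linarith
      have hpq : d p q (x i) ≤ 4 * ε' / ε₀ := key p q (hN₁ i hiN₁ j hjN₁) (hN₂ i hiN₂ j hjN₂)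
      have hqr : d q r (x i) ≤ 4 * ε' / ε₀ := key q r (hN₂ i hiN₂ j hjN₂) (hN₃ i hiN₃ j hjN₃)
      have hpr : d p r (x i) ≤ 4 * ε' / ε₀ := key p r (hN₁ i hiN₁ j hjN₁) (hN₃ i hiN₃ j hjN₃)
      have htet := hTetr p q r (x i)
      have h12 : 4 * ε' / ε₀ = 4 * ε / 13 := by
        rw [hε'def]; field_simp
      rw [h12] at hpq hqr hpr
      linarith
    · -- maximality
      intro Z hYZ hZcol
      refine Set.Subset.antisymm ?_ hYZ
      intro z hz
      simp only [Set.mem_setOf_eq]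
      intro ε hε
      by_contra hcon
      push_neg at hcon
      choose I hI J hJ hdz using hcon
      obtain ⟨a, v, hv, hta⟩ := hcompact (fun n => x (I n))
      obtain ⟨b, w, hw, htb⟩ := hcompact (fun n => x (J (v n)))
      have hta' : Tendsto (fun n => φ (x (I (v (w n)))) a) atTop (𝓝 0) :=
        hta.comp hw.tendsto_atTop
      have haS : a ∈ {y : X | ∀ ε > (0:ℝ), ∃ N : ℕ, ∀ i ≥ N, ∀ j ≥ N, d y (x i) (x j) < ε} := by
        refine stepLIM a ?_
        intro δ hδ m
        obtain ⟨N, hN⟩ := hget _ hta δ hδ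
        refine ⟨I (v (max N m)), ?_, hN (max N m) (le_max_left _ _)⟩
        exact le_trans (le_max_right N m) (le_trans hv.le_apply (hI _))
      have hbS : b ∈ {y : X | ∀ ε > (0:ℝ), ∃ N : ℕ, ∀ i ≥ N, ∀ j ≥ N, d y (x i) (x j) < ε} := by
        refine stepLIM b ?_
        intro δ hδ m
        obtain ⟨N, hN⟩ := hget _ htb δ hδ
        refine ⟨J (v (w (max N m))), ?_, hN (max N m) (le_max_left _ _)⟩
        exact le_trans (le_max_right N m)
          (le_trans hw.le_apply (le_trans hv.le_apply (hJ _)))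
      have hzab : d z a b = 0 := hZcol z hz a (hYZ haS) b (hYZ hbS)
      obtain ⟨N₁, hN₁⟩ := hget _ hta' (ε/8) (by linarith)
      obtain ⟨N₂, hN₂⟩ := hget _ htb (ε/8) (by linarith)
      set n := max N₁ N₂ with hndef
      set M := v (w n) with hMdef
      have hφa : φ (x (I M)) a < ε/8 := hN₁ n (le_max_left _ _)
      have hφb : φ (x (J M)) b < ε/8 := hN₂ n (le_max_right _ _)
      have hlow : ε ≤ d z (x (I M)) (x (J M)) := hdz M
      have h1 : d z (x (I M)) (x (J M)) ≤
          d z (x (I M)) b + d (x (I M)) (x (J M)) b + d z (x (J M)) b := hTetr _ _ _ _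
      have h2 : d z (x (I M)) b ≤
          d z (x (I M)) a + d (x (I M)) b a + d z b a := hTetr _ _ _ _
      have h3 : d z b a = 0 := by rw [hSym₂ z b a]; exact hzab
      have h4 : d z (x (I M)) a ≤ φ (x (I M)) a := hle23 _ _ _
      have h5 : d (x (I M)) b a ≤ φ (x (I M)) a := by
        rw [hSym₂ (x (I M)) b a]; exact hle12 _ _ _
      have h6 : d (x (I M)) (x (J M)) b ≤ φ (x (J M)) b := hle23 _ _ _
      have h7 : d z (x (J M)) b ≤ φ (x (J M)) b := hle23 _ _ _
      linarith
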